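/- Let n ≥ 3 and let U = span⟨E₁₁ − E_nn⟩ + B_{n−1,2} ≤ sl_n(ℂ). Then there exist g₁, g₂ ∈ SL_n(ℂ) (one may take the flip F along the antidiagonal and the long cycle permutation matrix, adjusted to have determinant 1) such that U + g₁Ug₁⁻¹ + g₂Ug₂⁻¹ = sl_n(ℂ). -/

import Mathlib

/-- The Lie algebra `sl_n(ℂ)` of traceless matrices, as a subspace of `M_n(ℂ)`. -/
noncomputable def sln (n : ℕ) : Submodule ℂ (Matrix (Fin n) (Fin n) ℂ) :=
  LinearMap.ker (Matrix.traceLinearMap (Fin n) ℂ ℂ)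

/-- Conjugation by `g ∈ SL_n(ℂ)` as a linear map `x ↦ g x g⁻¹`. -/
noncomputable def slConj {n : ℕ} (g : Matrix.SpecialLinearGroup (Fin n) ℂ) :
    Matrix (Fin n) (Fin n) ℂ →ₗ[ℂ] Matrix (Fin n) (Fin n) ℂ where
  toFun x := (g : Matrix (Fin n) (Fin n) ℂ) * x * ((g⁻¹ : Matrix.SpecialLinearGroup (Fin n) ℂ) : Matrix (Fin n) (Fin n) ℂ)
  map_add' x y := by simp [Matrix.mul_add, Matrix.add_mul]
  map_smul' c x := by simp [Matrix.mul_smul, Matrix.smul_mul]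

/-- The subspace `B_{n−1,2} ∩ sl_n(ℂ)`: the span of those elementary matrices `E k ℓ`
(`1`-based indices) with `k ≤ n−1`, `ℓ ≥ 2`, intersected with the traceless matrices. -/
noncomputable def Bn12 (n : ℕ) : Submodule ℂ (Matrix (Fin n) (Fin n) ℂ) :=
  (Submodule.span ℂ
    {m : Matrix (Fin n) (Fin n) ℂ |
      ∃ k ℓ : Fin n, (k : ℕ) + 1 ≤ n - 1 ∧ 2 ≤ (ℓ : ℕ) + 1 ∧
        m = Matrix.single k ℓ 1}) ⊓ sln n

namespace Stmt8Aux

open Matrix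

variable {n : ℕ}

lemma slConj_eq (g : Matrix.SpecialLinearGroup (Fin n) ℂ) (x y : Matrix (Fin n) (Fin n) ℂ)
    (h : (g : Matrix (Fin n) (Fin n) ℂ) * x = y * (g : Matrix (Fin n) (Fin n) ℂ)) :
    slConj g x = y := by
  have hg : (g : Matrix (Fin n) (Fin n) ℂ) *
      ((g⁻¹ : Matrix.SpecialLinearGroup (Fin n) ℂ) : Matrix (Fin n) (Fin n) ℂ) = 1 := by
    rw [← Matrix.SpecialLinearGroup.coe_mul, mul_inv_cancel, Matrix.SpecialLinearGroup.coe_one]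
  show (g : Matrix (Fin n) (Fin n) ℂ) * x * _ = y
  rw [h, Matrix.mul_assoc, hg, Matrix.mul_one]

lemma trace_slConj (g : Matrix.SpecialLinearGroup (Fin n) ℂ) (x : Matrix (Fin n) (Fin n) ℂ) :
    Matrix.trace (slConj g x) = Matrix.trace x := by
  have hg : ((g⁻¹ : Matrix.SpecialLinearGroup (Fin n) ℂ) : Matrix (Fin n) (Fin n) ℂ) *
      (g : Matrix (Fin n) (Fin n) ℂ) = 1 := by
    rw [← Matrix.SpecialLinearGroup.coe_mul, inv_mul_cancel, Matrix.SpecialLinearGroup.coe_one]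
  show Matrix.trace ((g : Matrix (Fin n) (Fin n) ℂ) * x * _) = _
  rw [Matrix.trace_mul_cycle, hg, Matrix.one_mul]

/-- sign correction -/
noncomputable def dd (σ : Equiv.Perm (Fin n)) (i : Fin n) : ℂ :=
  if (i : ℕ) = 0 then ((Equiv.Perm.sign σ : ℤ) : ℂ) else 1

lemma dd_sq (σ : Equiv.Perm (Fin n)) (i : Fin n) : dd σ i * dd σ i = 1 := by
  unfold dd
  rcases Int.units_eq_one_or (Equiv.Perm.sign σ) with h | h <;> split <;> simp [h]

lemma diag_mul_std (d : Fin n → ℂ) (k l : Fin n) (c : ℂ) :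
    Matrix.diagonal d * Matrix.single k l c = Matrix.single k l (d k * c) := by
  ext i j
  rw [Matrix.diagonal_mul]
  by_cases hi : k = i <;> by_cases hj : l = j <;> simp [Matrix.single, hi, hj]

lemma std_mul_diag (d : Fin n → ℂ) (k l : Fin n) (c : ℂ) :
    Matrix.single k l c * Matrix.diagonal d = Matrix.single k l (c * d l) := by
  ext i j
  rw [Matrix.mul_diagonal]
  by_cases hi : k = i <;> by_cases hj : l = j <;> simp [Matrix.single, hi, hj]

lemma perm_mul_std (σ : Equiv.Perm (Fin n)) (k l : Fin n) (c : ℂ) :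
    (σ.permMatrix ℂ) * Matrix.single k l c = Matrix.single (σ⁻¹ k) l c := by
  rw [PEquiv.toMatrix_toPEquiv_mul]
  ext i j
  simp only [Matrix.submatrix_apply, id_eq, Matrix.single, Matrix.of_apply]
  congr 1
  simp only [eq_iff_iff, and_congr_left_iff]
  intro _
  constructor
  · intro h; subst h; simp
  · intro h; subst h; simp

lemma std_mul_perm (σ : Equiv.Perm (Fin n)) (k l : Fin n) (c : ℂ) :
    Matrix.single k l c * (σ.permMatrix ℂ) = Matrix.single k (σ l) c := by
  rw [PEquiv.mul_toMatrix_toPEquiv]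
  ext i j
  simp only [Matrix.submatrix_apply, id_eq, Matrix.single, Matrix.of_apply]
  congr 1
  simp only [eq_iff_iff, and_congr_right_iff]
  intro _
  constructor
  · intro h; subst h; simp
  · intro h; subst h; simp

/-- A special linear group element built from a permutation, with a sign fix. -/
noncomputable def gSL (hn : 0 < n) (σ : Equiv.Perm (Fin n)) :
    Matrix.SpecialLinearGroup (Fin n) ℂ :=
  ⟨σ.permMatrix ℂ * Matrix.diagonal (dd σ), by
    rw [Matrix.det_mul, Matrix.det_permutation, Matrix.det_diagonal]
    have : ∏ i : Fin n, dd σ i = ((Equiv.Perm.sign σ : ℤ) : ℂ) := by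
      rw [Finset.prod_eq_single (⟨0, hn⟩ : Fin n)]
      · simp [dd]
      · intro b _ hb
        have : (b : ℕ) ≠ 0 := by
          intro h; apply hb; exact Fin.ext h
        simp [dd, this]
      · simp
    rw [this]
    rcases Int.units_eq_one_or (Equiv.Perm.sign σ) with h | h <;> simp [h]⟩

lemma slConj_gSL (hn : 0 < n) (σ : Equiv.Perm (Fin n)) (k l : Fin n) (c : ℂ) :
    slConj (gSL hn σ) (Matrix.single k l (dd σ k * dd σ l * c)) =
      Matrix.single (σ⁻¹ k) (σ⁻¹ l) c := by
  apply slConj_eq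
  show (σ.permMatrix ℂ * Matrix.diagonal (dd σ)) * _ = _ * (σ.permMatrix ℂ * Matrix.diagonal (dd σ))
  rw [Matrix.mul_assoc, diag_mul_std, perm_mul_std, ← Matrix.mul_assoc, std_mul_perm,
    std_mul_diag, Equiv.Perm.inv_def, Equiv.apply_symm_apply]
  rw [show dd σ k * (dd σ k * dd σ l * c) = (dd σ k * dd σ k) * (dd σ l * c) by ring, dd_sq,
    one_mul, mul_comm]

end Stmt8Aux

open Stmt8Aux Matrix in
theorem stmt_8 (n : ℕ) (hn : 3 ≤ n)
    (U : Submodule ℂ (Matrix (Fin n) (Fin n) ℂ))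
    (hUdef : U = Submodule.span ℂ
        {Matrix.single (⟨0, by omega⟩ : Fin n) (⟨0, by omega⟩ : Fin n) (1 : ℂ) -
          Matrix.single (⟨n - 1, by omega⟩ : Fin n) (⟨n - 1, by omega⟩ : Fin n) 1} ⊔
      Bn12 n) :
    ∃ g₁ g₂ : Matrix.SpecialLinearGroup (Fin n) ℂ,
      U ⊔ Submodule.map (slConj g₁) U ⊔ Submodule.map (slConj g₂) U = sln n := by
  have hn0 : 0 < n := by omega
  set z : Fin n := ⟨0, by omega⟩ with hz
  set o : Fin n := ⟨1, by omega⟩ with ho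
  set m1 : Fin n := ⟨n - 1, by omega⟩ with hm1
  -- the two group elements
  refine ⟨gSL hn0 Fin.revPerm, gSL hn0 (Equiv.swap o m1), ?_⟩
  set g₁ := gSL hn0 (Fin.revPerm (n := n)) with hg₁
  set g₂ := gSL hn0 (Equiv.swap o m1) with hg₂
  set S := U ⊔ Submodule.map (slConj g₁) U ⊔ Submodule.map (slConj g₂) U with hS
  -- basic memberships in U
  have hU1 : Matrix.single z z (1:ℂ) - Matrix.single m1 m1 1 ∈ U := by
    rw [hUdef]
    exact Submodule.mem_sup_left (Submodule.subset_span rfl)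
  have hU2 : ∀ (k l : Fin n), (k : ℕ) ≤ n - 2 → 1 ≤ (l : ℕ) → k ≠ l → ∀ c : ℂ,
      Matrix.single k l c ∈ U := by
    intro k l hk hl hne c
    rw [hUdef]
    apply Submodule.mem_sup_right
    have h1 : Matrix.single k l (1:ℂ) ∈ Bn12 n := by
      refine Submodule.mem_inf.mpr ⟨Submodule.subset_span ⟨k, l, by omega, by omega, rfl⟩, ?_⟩
      show Matrix.traceLinearMap (Fin n) ℂ ℂ _ = 0
      exact Matrix.trace_single_eq_of_ne k l 1 hne
    have := Submodule.smul_mem (Bn12 n) c h1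
    rwa [Matrix.smul_single, smul_eq_mul, mul_one] at this
  have hU3 : ∀ (k l : Fin n), 1 ≤ (k : ℕ) → (k : ℕ) ≤ n - 2 → 1 ≤ (l : ℕ) → (l : ℕ) ≤ n - 2 →
      Matrix.single k k (1:ℂ) - Matrix.single l l 1 ∈ U := by
    intro k l hk1 hk2 hl1 hl2
    rw [hUdef]
    apply Submodule.mem_sup_right
    refine Submodule.mem_inf.mpr ⟨Submodule.sub_mem _
        (Submodule.subset_span ⟨k, k, by omega, by omega, rfl⟩)
        (Submodule.subset_span ⟨l, l, by omega, by omega, rfl⟩), ?_⟩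
    show Matrix.traceLinearMap (Fin n) ℂ ℂ _ = 0
    rw [map_sub, Matrix.traceLinearMap_apply, Matrix.traceLinearMap_apply,
      Matrix.trace_single_eq_same, Matrix.trace_single_eq_same, sub_self]
  -- U ≤ S etc.
  have hUS : U ≤ S := le_trans le_sup_left le_sup_left
  -- key membership A: all off-diagonal elementary matrices are in S
  have hA : ∀ (i j : Fin n), i ≠ j → ∀ c : ℂ, Matrix.single i j c ∈ S := by
    intro i j hij c
    by_cases hcase : (i : ℕ) ≤ n - 2 ∧ 1 ≤ (j : ℕ)
    · exact hUS (hU2 i j hcase.1 hcase.2 hij c)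
    · -- use g₁ conjugation
      have hij' : (i : ℕ) ≠ (j : ℕ) := fun h => hij (Fin.ext h)
      have hi : 1 ≤ (i : ℕ) ∧ (j : ℕ) ≤ n - 2 := by
        push_neg at hcase
        have hi2 : (i : ℕ) < n := i.isLt
        have hj2 : (j : ℕ) < n := j.isLt
        omega
      have hk : ((Fin.rev i : Fin n) : ℕ) ≤ n - 2 := by
        rw [Fin.val_rev]; have := i.isLt; omega
      have hl : 1 ≤ ((Fin.rev j : Fin n) : ℕ) := by
        rw [Fin.val_rev]; have := j.isLt; omega
      have hne : Fin.rev i ≠ Fin.rev j := fun h => hij (Fin.rev_injective h)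
      set c₀ : ℂ := dd (Fin.revPerm (n := n)) (Fin.rev i) * dd (Fin.revPerm (n := n)) (Fin.rev j) * c
      have hmem : Matrix.single (Fin.rev i) (Fin.rev j) c₀ ∈ U :=
        hU2 _ _ hk hl hne c₀
      have hconj := slConj_gSL hn0 (Fin.revPerm (n := n)) (Fin.rev i) (Fin.rev j) c
      have hrev : (Fin.revPerm (n := n))⁻¹ = Fin.revPerm := by
        ext x; simp [Equiv.Perm.inv_def, Fin.val_rev]
      rw [hrev] at hconj
      simp only [Fin.revPerm_apply, Fin.rev_rev] at hconj
      have : Matrix.single i j c ∈ Submodule.map (slConj g₁) U :=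
        ⟨_, hmem, hconj⟩
      exact Submodule.mem_sup_left (Submodule.mem_sup_right this)
  -- key membership B: diagonal differences
  have hB : ∀ i : Fin n,
      Matrix.single i i (1:ℂ) - Matrix.single z z 1 ∈ S := by
    intro i
    rcases eq_or_ne i z with rfl | hiz
    · simpa using Submodule.zero_mem S
    rcases eq_or_ne i m1 with rfl | him
    · have := Submodule.neg_mem _ (hUS hU1)
      simpa using this
    -- now 1 ≤ i ≤ n-2
    have hi1 : 1 ≤ (i : ℕ) := by
      rcases Nat.eq_zero_or_pos (i : ℕ) with h | h
      · exact absurd (Fin.ext h) hiz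
      · exact h
    have hi2 : (i : ℕ) ≤ n - 2 := by
      have := i.isLt
      have : (i : ℕ) ≠ n - 1 := fun h => him (Fin.ext h)
      omega
    -- E_ii - E_oo ∈ U
    have h1 : Matrix.single i i (1:ℂ) - Matrix.single o o 1 ∈ U :=
      hU3 i o hi1 hi2 (by simp [ho]) (by show (1:ℕ) ≤ n - 2; omega)
    -- E_zz - E_oo ∈ conj g₂ U
    have hzo : (Equiv.swap o m1) z = z := by
      rw [Equiv.swap_apply_of_ne_of_ne]
      · intro h; rw [hz, ho] at h
        exact absurd (congrArg Fin.val h) (by simp only [Fin.val_mk]; omega)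
      · intro h; rw [hz, hm1] at h
        exact absurd (congrArg Fin.val h) (by simp only [Fin.val_mk]; omega)
    have h2 : Matrix.single z z (1:ℂ) - Matrix.single o o 1 ∈
        Submodule.map (slConj g₂) U := by
      have hswinv : (Equiv.swap o m1)⁻¹ = Equiv.swap o m1 := Equiv.swap_inv o m1
      have hc1 := slConj_gSL hn0 (Equiv.swap o m1) z z 1
      have hc2 := slConj_gSL hn0 (Equiv.swap o m1) m1 m1 1
      rw [hswinv, hzo] at hc1
      rw [hswinv, Equiv.swap_apply_right] at hc2
      rw [mul_one, dd_sq] at hc1 hc2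
      refine ⟨Matrix.single z z 1 - Matrix.single m1 m1 1, hU1, ?_⟩
      rw [map_sub, hc1, hc2]
    have hfin := Submodule.sub_mem S (hUS h1) (Submodule.mem_sup_right h2)
    have heq : Matrix.single i i (1:ℂ) - Matrix.single z z 1 =
        (Matrix.single i i 1 - Matrix.single o o 1) -
        (Matrix.single z z 1 - Matrix.single o o 1) := by abel
    rw [heq]; exact hfin
  -- U is contained in sl_n
  have hUsln : U ≤ sln n := by
    rw [hUdef]
    apply sup_le
    · rw [Submodule.span_le]
      rintro y hy
      rw [Set.mem_singleton_iff] at hy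
      subst hy
      show Matrix.traceLinearMap (Fin n) ℂ ℂ _ = 0
      rw [map_sub, Matrix.traceLinearMap_apply, Matrix.traceLinearMap_apply,
        Matrix.trace_single_eq_same, Matrix.trace_single_eq_same, sub_self]
    · exact inf_le_right
  apply le_antisymm
  · refine sup_le (sup_le hUsln ?_) ?_
    all_goals
      rintro y ⟨w, hw, rfl⟩
      show Matrix.traceLinearMap (Fin n) ℂ ℂ _ = 0
      rw [Matrix.traceLinearMap_apply, trace_slConj]
      exact hUsln hw
  · intro x hx
    have htr' : ∑ i, x i i = 0 := by
      simpa [sln, Matrix.trace, Matrix.diag] using hx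
    have hxeq : x = (∑ p : Fin n × Fin n,
          if p.1 = p.2 then 0 else Matrix.single p.1 p.2 (x p.1 p.2))
        + ∑ i, x i i • (Matrix.single i i 1 - Matrix.single z z 1) := by
      ext a b
      simp only [Matrix.add_apply, Matrix.sum_apply, Matrix.smul_apply, Matrix.sub_apply,
        Matrix.single, Matrix.of_apply, smul_eq_mul,
        apply_ite (fun M : Matrix (Fin n) (Fin n) ℂ => M a b), Matrix.zero_apply]
      rw [Fintype.sum_prod_type]
      by_cases hab : a = b
      · subst hab
        have e1 : ∀ i : Fin n, (∑ j, if i = j then (0:ℂ) else if i = a ∧ j = a then x i j else 0) = 0 := by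
          intro i
          apply Finset.sum_eq_zero
          intro j _
          by_cases h : i = j
          · simp [h]
          · simp only [h, if_false]
            by_cases h2 : i = a ∧ j = a
            · exact absurd (h2.1.trans h2.2.symm) h
            · simp [h2]
        rw [Finset.sum_congr rfl (fun i _ => e1 i), Finset.sum_const_zero, zero_add]
        have e2 : ∀ i : Fin n, x i i * ((if i = a ∧ i = a then (1:ℂ) else 0) - if z = a ∧ z = a then 1 else 0)
            = x i i * ((if i = a then (1:ℂ) else 0) - if z = a then 1 else 0) := by
          intro i; simp
        rw [Finset.sum_congr rfl (fun i _ => e2 i)]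
        simp only [mul_sub]
        rw [Finset.sum_sub_distrib]
        have hsum1 : (∑ i : Fin n, x i i * (if i = a then (1:ℂ) else 0)) = x a a := by
          simp only [mul_ite, mul_one, mul_zero]
          rw [Finset.sum_ite_eq' Finset.univ a (fun i => x i i)]
          simp
        have hsum2 : (∑ i : Fin n, x i i * (if z = a then (1:ℂ) else 0)) = 0 := by
          by_cases hza : z = a <;> simp [hza, htr']
        rw [hsum1, hsum2, sub_zero]
      · -- off diagonal
        have e2 : ∀ i : Fin n, x i i * ((if i = a ∧ i = b then (1:ℂ) else 0) - if z = a ∧ z = b then 1 else 0) = 0 := by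
          intro i
          have h1 : ¬(i = a ∧ i = b) := fun ⟨h1, h2⟩ => hab (h1.symm.trans h2)
          have h2 : ¬(z = a ∧ z = b) := fun ⟨h1, h2⟩ => hab (h1.symm.trans h2)
          simp [h1, h2]
        rw [Finset.sum_congr rfl (fun i _ => e2 i), Finset.sum_const_zero, add_zero]
        have e1 : ∀ i : Fin n, (∑ j, if i = j then (0:ℂ) else if i = a ∧ j = b then x i j else 0)
            = ∑ j, if i = a ∧ j = b then x i j else 0 := by
          intro i
          apply Finset.sum_congr rfl
          intro j _
          by_cases h : i = j
          · subst h
            have : ¬(i = a ∧ i = b) := fun ⟨h1, h2⟩ => hab (h1.symm.trans h2)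
            simp [this]
          · simp [h]
        rw [Finset.sum_congr rfl (fun i _ => e1 i)]
        have : ∀ i : Fin n, (∑ j, if i = a ∧ j = b then x i j else 0) = if i = a then x i b else 0 := by
          intro i
          by_cases h : i = a
          · subst h
            simp only [true_and]
            rw [Finset.sum_ite_eq' Finset.univ b (fun j => x i j)]
            simp
          · simp [h]
        rw [Finset.sum_congr rfl (fun i _ => this i), Finset.sum_ite_eq' Finset.univ a (fun i => x i b)]
        simp
    rw [hxeq]
    refine Submodule.add_mem S (Submodule.sum_mem S ?_) (Submodule.sum_mem S ?_)
    · rintro ⟨i, j⟩ -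
      by_cases hp : i = j
      · simp [hp]
      · simpa [hp] using hA i j hp (x i j)
    · exact fun i _ => Submodule.smul_mem S _ (hB i)
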